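/- On a complete graph, for any finitely supported f and t ≥ 0, the time derivative of Γ(P_t f) is ℓ¹-bounded: ‖(d/dt) Γ(P_t f)‖_{ℓ¹(V,m)} ≤ 2√(Q(f) Q(Δf)). -/

import Mathlib

open scoped BigOperators
open Filter

/-- The carré du champ operator. -/
noncomputable def gam {V : Type*} (m : V → ℝ) (μ : V → V → ℝ) (f g : V → ℝ) (x : V) : ℝ :=
  (1 / (2 * m x)) * ∑' y, μ x y * (f y - f x) * (g y - g x)

/-- The formal graph Laplacian. -/
noncomputable def lap {V : Type*} (m : V → ℝ) (μ : V → V → ℝ) (f : V → ℝ) (x : V) : ℝ :=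
  (1 / m x) * ∑' y, μ x y * (f y - f x)

/-- The Dirichlet energy `Q(f) = (1/2) ∑_{x,y} μ_{xy} (f y - f x)²`. -/
noncomputable def QN {V : Type*} (μ : V → V → ℝ) (f : V → ℝ) : ℝ :=
  (1 / 2) * ∑' p : V × V, μ p.1 p.2 * (f p.2 - f p.1) ^ 2

/-- The `ℓ²(V,m)` norm. -/
noncomputable def l2n {V : Type*} (m : V → ℝ) (f : V → ℝ) : ℝ :=
  Real.sqrt (∑' x, f x ^ 2 * m x)

/-- The iterated carré du champ `Γ₂(f) = (1/2) Δ Γ(f) - Γ(f, Δ f)`. -/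
noncomputable def gam2 {V : Type*} (m : V → ℝ) (μ : V → V → ℝ) (f : V → ℝ) (x : V) : ℝ :=
  (1 / 2) * lap m μ (fun y => gam m μ f f y) x - gam m μ f (lap m μ f) x

section helpers
variable {V : Type*}

lemma tsum_nbr {μ : V → V → ℝ} (hlf : ∀ x, (Function.support (μ x)).Finite) (x : V)
    (F : V → ℝ) (hF : ∀ y, μ x y = 0 → F y = 0) :
    ∑' y, F y = ∑ y ∈ (hlf x).toFinset, F y := by
  refine tsum_eq_sum (fun y hy => ?_)
  apply hF
  by_contra h
  exact hy ((hlf x).mem_toFinset.2 h)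

lemma summable_of_support_finite {ι : Type*} {f : ι → ℝ} (h : (Function.support f).Finite) :
    Summable f := by
  refine summable_of_ne_finset_zero (s := h.toFinset) (fun i hi => ?_)
  by_contra h'
  exact hi (h.mem_toFinset.2 h')

lemma pair_support_finite {μ : V → V → ℝ}
    (hsym : ∀ x y, μ x y = μ y x) (hlf : ∀ x, (Function.support (μ x)).Finite)
    {f : V → ℝ} (hf : (Function.support f).Finite) :
    (Function.support (fun p : V × V => μ p.1 p.2 * (f p.2 - f p.1) ^ 2)).Finite := by
  have h1 : ((⋃ x ∈ Function.support f, ({x} : Set V) ×ˢ Function.support (μ x)) ∪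
      ⋃ y ∈ Function.support f, (Function.support (μ y)) ×ˢ ({y} : Set V)).Finite := by
    refine Set.Finite.union ?_ ?_
    · exact Set.Finite.biUnion hf (fun x _ => (Set.finite_singleton x).prod (hlf x))
    · exact Set.Finite.biUnion hf (fun y _ => (hlf y).prod (Set.finite_singleton y))
  refine h1.subset (fun p hp => ?_)
  simp only [Function.mem_support] at hp
  have hμ : μ p.1 p.2 ≠ 0 := fun h => hp (by simp [h])
  have hne : f p.2 - f p.1 ≠ 0 := fun h => hp (by simp [h])
  rcases eq_or_ne (f p.1) 0 with h1' | h1'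
  · have h2 : f p.2 ≠ 0 := by intro h; apply hne; rw [h, h1', sub_zero]
    refine Set.mem_union_right _ ?_
    simp only [Set.mem_iUnion, Set.mem_prod, Function.mem_support]
    exact ⟨p.2, h2, by rw [hsym p.2 p.1]; exact hμ, rfl⟩
  · refine Set.mem_union_left _ ?_
    simp only [Set.mem_iUnion, Set.mem_prod, Function.mem_support]
    exact ⟨p.1, h1', rfl, hμ⟩

lemma lap_support_finite {m : V → ℝ} {μ : V → V → ℝ}
    (hsym : ∀ x y, μ x y = μ y x) (hlf : ∀ x, (Function.support (μ x)).Finite)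
    {f : V → ℝ} (hf : (Function.support f).Finite) :
    (Function.support (lap m μ f)).Finite := by
  have hS : (Function.support f ∪ ⋃ y ∈ Function.support f, Function.support (μ y)).Finite :=
    hf.union (Set.Finite.biUnion hf (fun y _ => hlf y))
  refine hS.subset (fun x hx => ?_)
  by_contra hxS
  simp only [Set.mem_union, Set.mem_iUnion, not_or, not_exists] at hxS
  obtain ⟨hxf, hxy⟩ := hxS
  have hfx : f x = 0 := by
    by_contra h; exact hxf h
  have : ∀ y, μ x y * (f y - f x) = 0 := by
    intro y
    rcases eq_or_ne (f y) 0 with h | h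
    · simp [h, hfx]
    · have : μ y x = 0 := by
        have := hxy y h
        by_contra h'
        exact this h'
      rw [hsym x y, this, zero_mul]
  apply hx
  simp only [lap, Function.mem_support] at hx ⊢
  simp [this]

lemma QN_nonneg {μ : V → V → ℝ} (hnn : ∀ x y, 0 ≤ μ x y) (f : V → ℝ) : 0 ≤ QN μ f := by
  have : 0 ≤ ∑' p : V × V, μ p.1 p.2 * (f p.2 - f p.1) ^ 2 :=
    tsum_nonneg (fun p => mul_nonneg (hnn _ _) (sq_nonneg _))
  simp only [QN]
  positivity

lemma finset_cs {ι : Type*} (s : Finset ι) (f g : ι → ℝ) :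
    |∑ i ∈ s, f i * g i| ≤ Real.sqrt (∑ i ∈ s, f i ^ 2) * Real.sqrt (∑ i ∈ s, g i ^ 2) := by
  have h := Finset.sum_mul_sq_le_sq_mul_sq s f g
  have h2 : |∑ i ∈ s, f i * g i| = Real.sqrt ((∑ i ∈ s, f i * g i) ^ 2) := by
    rw [Real.sqrt_sq_eq_abs]
  rw [h2, ← Real.sqrt_mul (by positivity)]
  exact Real.sqrt_le_sqrt h

end helpers

/-- The core cutoff (Caccioppoli-type) estimate. -/
lemma cutoff_bound {V : Type*} (m : V → ℝ) (μ : V → V → ℝ)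
    (hm : ∀ x, 0 < m x) (hsym : ∀ x y, μ x y = μ y x)
    (hnn : ∀ x y, 0 ≤ μ x y) (hlf : ∀ x, (Function.support (μ x)).Finite)
    (e : V → ℝ) (hefin : (Function.support e).Finite)
    (he0 : ∀ x, 0 ≤ e x) (he1 : ∀ x, e x ≤ 1)
    (c : ℝ) (hc : 0 ≤ c)
    (hegam : ∀ x, ∑ y ∈ (hlf x).toFinset, μ x y * (e y - e x) ^ 2 ≤ 2 * m x * c)
    (P : ℝ → (V → ℝ) → V → ℝ)
    (hP0 : ∀ f, P 0 f = f)
    (hheat : ∀ (f : V → ℝ) (x : V) (t : ℝ), HasDerivAt (fun s => P s f x) (lap m μ (P t f) x) t)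
    (g : V → ℝ) (hg : (Function.support g).Finite) (W : ℝ)
    (hwl2 : ∀ s : ℝ, 0 ≤ s → Summable (fun x => (lap m μ (P s g) x) ^ 2 * m x) ∧
      ∑' x, (lap m μ (P s g) x) ^ 2 * m x ≤ W)
    (t : ℝ) (ht : 0 ≤ t) (δ : ℝ) (hδ : 0 < δ) (s : Finset (V × V)) :
    ∑ p ∈ s, μ p.1 p.2 * (e p.1 ^ 2 * (P t g p.2 - P t g p.1) ^ 2) ≤
      (Real.sqrt (2 * QN μ g + δ) + 2 * Real.sqrt (2 * W * c) * t) ^ 2 := by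
  classical
  have hW0 : 0 ≤ W := le_trans (tsum_nonneg (fun x => mul_nonneg (sq_nonneg _) (hm x).le))
    (hwl2 0 le_rfl).2
  set nb : V → Finset V := fun x => (hlf x).toFinset with hnbdef
  set A : Finset V := hefin.toFinset with hAdef
  set T : Finset V := A ∪ A.biUnion nb with hTdef
  have hAe : ∀ x, x ∉ A → e x = 0 := by
    intro x hx
    by_contra h
    exact hx (hefin.mem_toFinset.2 h)
  have hnb0 : ∀ {x y}, y ∉ nb x → μ x y = 0 := by
    intro x y hy
    by_contra h
    exact hy ((hlf x).mem_toFinset.2 h)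
  have hnbT : ∀ x ∈ A, nb x ⊆ T := by
    intro x hx y hy
    exact Finset.mem_union_right _ (Finset.mem_biUnion.2 ⟨x, hx, hy⟩)
  have hAT : A ⊆ T := Finset.subset_union_left
  -- the localized energy and its derivative
  set G : ℝ → ℝ := fun r => ∑ x ∈ T, ∑ y ∈ T,
    (μ x y * e x ^ 2) * (P r g y - P r g x) ^ 2 with hGdef
  set D : ℝ → ℝ := fun r => ∑ x ∈ T, ∑ y ∈ T,
    (μ x y * e x ^ 2) * (2 * (P r g y - P r g x) *
      (lap m μ (P r g) y - lap m μ (P r g) x)) with hDdef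
  have hGnn : ∀ r, 0 ≤ G r := by
    intro r
    apply Finset.sum_nonneg; intro x _
    apply Finset.sum_nonneg; intro y _
    exact mul_nonneg (mul_nonneg (hnn x y) (sq_nonneg _)) (sq_nonneg _)
  have hGd : ∀ r, HasDerivAt G (D r) r := by
    intro r
    apply HasDerivAt.fun_sum
    intro x _
    apply HasDerivAt.fun_sum
    intro y _
    have h1 : HasDerivAt (fun u => (P u g y - P u g x) ^ 2)
        (2 * (P r g y - P r g x) ^ 1 * (lap m μ (P r g) y - lap m μ (P r g) x)) r := by
      have := ((hheat g y r).sub (hheat g x r)).pow 2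
      norm_num at this
      exact this.congr_deriv (by ring)
    have := h1.const_mul (μ x y * e x ^ 2)
    exact this.congr_deriv (by ring)
  -- derivative bound
  have hDle : ∀ r, 0 ≤ r → D r ≤ (4 * Real.sqrt (2 * W * c)) * Real.sqrt (G r) := by
    intro r hr
    set u : V → ℝ := P r g with hudef
    set w : V → ℝ := fun x => lap m μ (P r g) x with hwdef
    set S1 : ℝ := ∑ x ∈ T, ∑ y ∈ T, μ x y * ((u y - u x) * (e y ^ 2 * w y - e x ^ 2 * w x))
      with hS1def
    set S2 : ℝ := ∑ x ∈ T, ∑ y ∈ T, μ x y * ((u y - u x) * (w y * (e y ^ 2 - e x ^ 2)))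
      with hS2def
    have hsplit : D r = 2 * S1 - 2 * S2 := by
      simp only [hDdef, hS1def, hS2def, Finset.mul_sum, ← Finset.sum_sub_distrib]
      apply Finset.sum_congr rfl; intro x _
      apply Finset.sum_congr rfl; intro y _
      ring
    -- S1 is nonpositive
    have hinner : ∀ x ∈ A, ∑ y ∈ T, μ x y * (u y - u x) = m x * w x := by
      intro x hx
      have h1 : ∑ y ∈ T, μ x y * (u y - u x) = ∑ y ∈ nb x, μ x y * (u y - u x) := by
        refine (Finset.sum_subset (hnbT x hx) ?_).symm
        intro y _ hy
        rw [hnb0 hy, zero_mul]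
      have h2 : (∑' y, μ x y * (u y - u x)) = ∑ y ∈ nb x, μ x y * (u y - u x) :=
        tsum_nbr hlf x _ (fun y hy => by rw [hy, zero_mul])
      have hmx := (hm x).ne'
      rw [h1, ← h2, hwdef]
      simp only [lap, hudef]
      field_simp
    have hsecond : ∑ x ∈ T, ∑ y ∈ T, μ x y * ((u y - u x) * (e x ^ 2 * w x)) =
        ∑ x ∈ T, e x ^ 2 * (w x ^ 2 * m x) := by
      apply Finset.sum_congr rfl
      intro x _
      by_cases hx : x ∈ A
      · have h3 : ∑ y ∈ T, μ x y * ((u y - u x) * (e x ^ 2 * w x)) =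
            (e x ^ 2 * w x) * ∑ y ∈ T, μ x y * (u y - u x) := by
          rw [Finset.mul_sum]; apply Finset.sum_congr rfl; intro y _; ring
        rw [h3, hinner x hx]; ring
      · simp [hAe x hx]
    have hS1eq : S1 = -2 * ∑ x ∈ T, e x ^ 2 * (w x ^ 2 * m x) := by
      have h1 : ∑ x ∈ T, ∑ y ∈ T, μ x y * ((u y - u x) * (e y ^ 2 * w y)) =
          - ∑ x ∈ T, ∑ y ∈ T, μ x y * ((u y - u x) * (e x ^ 2 * w x)) := by
        rw [Finset.sum_comm, ← Finset.sum_neg_distrib]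
        apply Finset.sum_congr rfl; intro x _
        rw [← Finset.sum_neg_distrib]
        apply Finset.sum_congr rfl; intro y _
        rw [hsym y x]; ring
      have h2 : S1 = (∑ x ∈ T, ∑ y ∈ T, μ x y * ((u y - u x) * (e y ^ 2 * w y))) -
          (∑ x ∈ T, ∑ y ∈ T, μ x y * ((u y - u x) * (e x ^ 2 * w x))) := by
        simp only [hS1def, ← Finset.sum_sub_distrib]
        apply Finset.sum_congr rfl; intro x _
        apply Finset.sum_congr rfl; intro y _
        ring
      rw [h2, h1, hsecond]; ring
    have hS1le : S1 ≤ 0 := by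
      rw [hS1eq]
      have : 0 ≤ ∑ x ∈ T, e x ^ 2 * (w x ^ 2 * m x) :=
        Finset.sum_nonneg (fun x _ => mul_nonneg (sq_nonneg _)
          (mul_nonneg (sq_nonneg _) (hm x).le))
      linarith
    -- bound on -S2 via Cauchy-Schwarz
    set E : ℝ := ∑ p ∈ T ×ˢ T, μ p.1 p.2 * (w p.2 ^ 2 * (e p.2 - e p.1) ^ 2) with hEdef
    have hEnn : 0 ≤ E :=
      Finset.sum_nonneg (fun p _ => mul_nonneg (hnn _ _)
        (mul_nonneg (sq_nonneg _) (sq_nonneg _)))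
    have hEle : E ≤ 2 * W * c := by
      have h1 : E = ∑ y ∈ T, ∑ x ∈ T, μ x y * (w y ^ 2 * (e y - e x) ^ 2) := by
        rw [hEdef, Finset.sum_product]
        exact Finset.sum_comm
      have h2 : ∀ y ∈ T, ∑ x ∈ T, μ x y * (w y ^ 2 * (e y - e x) ^ 2) ≤
          w y ^ 2 * (2 * m y * c) := by
        intro y _
        have h3 : ∑ x ∈ T, μ x y * (w y ^ 2 * (e y - e x) ^ 2) =
            w y ^ 2 * ∑ x ∈ T, μ x y * (e y - e x) ^ 2 := by
          rw [Finset.mul_sum]; apply Finset.sum_congr rfl; intro x _; ring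
        rw [h3]
        refine mul_le_mul_of_nonneg_left ?_ (sq_nonneg _)
        have h4 : ∑ x ∈ T, μ x y * (e y - e x) ^ 2 ≤
            ∑ x ∈ T ∪ nb y, μ x y * (e y - e x) ^ 2 :=
          Finset.sum_le_sum_of_subset_of_nonneg Finset.subset_union_left
            (fun x _ _ => mul_nonneg (hnn x y) (sq_nonneg _))
        have h5 : ∑ x ∈ T ∪ nb y, μ x y * (e y - e x) ^ 2 =
            ∑ x ∈ nb y, μ x y * (e y - e x) ^ 2 := by
          refine (Finset.sum_subset Finset.subset_union_right ?_).symm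
          intro x _ hx
          rw [hsym x y, hnb0 hx, zero_mul]
        have h6 : ∑ x ∈ nb y, μ x y * (e y - e x) ^ 2 =
            ∑ x ∈ nb y, μ y x * (e x - e y) ^ 2 := by
          apply Finset.sum_congr rfl; intro x _
          rw [hsym x y]; ring
        calc ∑ x ∈ T, μ x y * (e y - e x) ^ 2 ≤ ∑ x ∈ nb y, μ x y * (e y - e x) ^ 2 := by
              rw [← h5]; exact h4
          _ = ∑ x ∈ nb y, μ y x * (e x - e y) ^ 2 := h6
          _ ≤ 2 * m y * c := hegam y
      have h7 : ∑ y ∈ T, w y ^ 2 * (2 * m y * c) = 2 * c * ∑ y ∈ T, w y ^ 2 * m y := by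
        rw [Finset.mul_sum]; apply Finset.sum_congr rfl; intro y _; ring
      have h8 : ∑ y ∈ T, w y ^ 2 * m y ≤ W := by
        refine le_trans (Summable.sum_le_tsum T (fun x _ => mul_nonneg (sq_nonneg _) (hm x).le)
          (hwl2 r hr).1) (hwl2 r hr).2
      calc E = ∑ y ∈ T, ∑ x ∈ T, μ x y * (w y ^ 2 * (e y - e x) ^ 2) := h1
        _ ≤ ∑ y ∈ T, w y ^ 2 * (2 * m y * c) := Finset.sum_le_sum h2
        _ = 2 * c * ∑ y ∈ T, w y ^ 2 * m y := h7
        _ ≤ 2 * c * W := by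
            refine mul_le_mul_of_nonneg_left h8 (by positivity)
        _ = 2 * W * c := by ring
    -- the two Cauchy–Schwarz applications
    have hGsum : G r = ∑ p ∈ T ×ˢ T, μ p.1 p.2 * (e p.1 ^ 2 * (u p.2 - u p.1) ^ 2) := by
      rw [hGdef]
      simp only
      rw [Finset.sum_product]
      apply Finset.sum_congr rfl; intro x _
      apply Finset.sum_congr rfl; intro y _
      rw [hudef]; ring
    have hGswap : ∑ p ∈ T ×ˢ T, μ p.1 p.2 * (e p.2 ^ 2 * (u p.2 - u p.1) ^ 2) = G r := by
      rw [hGsum, Finset.sum_product, Finset.sum_product, Finset.sum_comm]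
      apply Finset.sum_congr rfl; intro x _
      apply Finset.sum_congr rfl; intro y _
      rw [hsym y x]; ring
    have hcs1 : ∑ p ∈ T ×ˢ T, (Real.sqrt (μ p.1 p.2) * (e p.2 * |u p.2 - u p.1|)) *
        (Real.sqrt (μ p.1 p.2) * (|w p.2| * |e p.2 - e p.1|)) ≤
        Real.sqrt (G r) * Real.sqrt E := by
      refine le_trans (le_abs_self _) (le_trans (finset_cs _ _ _) ?_)
      have e1 : ∑ p ∈ T ×ˢ T, (Real.sqrt (μ p.1 p.2) * (e p.2 * |u p.2 - u p.1|)) ^ 2 =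
          ∑ p ∈ T ×ˢ T, μ p.1 p.2 * (e p.2 ^ 2 * (u p.2 - u p.1) ^ 2) := by
        apply Finset.sum_congr rfl; intro p _
        rw [mul_pow, mul_pow, Real.sq_sqrt (hnn _ _), sq_abs]
      have e2 : ∑ p ∈ T ×ˢ T, (Real.sqrt (μ p.1 p.2) * (|w p.2| * |e p.2 - e p.1|)) ^ 2 =
          E := by
        rw [hEdef]
        apply Finset.sum_congr rfl; intro p _
        rw [mul_pow, mul_pow, Real.sq_sqrt (hnn _ _), sq_abs, sq_abs]
      rw [e1, e2, hGswap]
    have hcs2 : ∑ p ∈ T ×ˢ T, (Real.sqrt (μ p.1 p.2) * (e p.1 * |u p.2 - u p.1|)) *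
        (Real.sqrt (μ p.1 p.2) * (|w p.2| * |e p.2 - e p.1|)) ≤
        Real.sqrt (G r) * Real.sqrt E := by
      refine le_trans (le_abs_self _) (le_trans (finset_cs _ _ _) ?_)
      have e1 : ∑ p ∈ T ×ˢ T, (Real.sqrt (μ p.1 p.2) * (e p.1 * |u p.2 - u p.1|)) ^ 2 =
          ∑ p ∈ T ×ˢ T, μ p.1 p.2 * (e p.1 ^ 2 * (u p.2 - u p.1) ^ 2) := by
        apply Finset.sum_congr rfl; intro p _
        rw [mul_pow, mul_pow, Real.sq_sqrt (hnn _ _), sq_abs]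
      have e2 : ∑ p ∈ T ×ˢ T, (Real.sqrt (μ p.1 p.2) * (|w p.2| * |e p.2 - e p.1|)) ^ 2 =
          E := by
        rw [hEdef]
        apply Finset.sum_congr rfl; intro p _
        rw [mul_pow, mul_pow, Real.sq_sqrt (hnn _ _), sq_abs, sq_abs]
      rw [e1, e2, hGsum]
    have hnegS2 : -S2 ≤ 2 * (Real.sqrt (G r) * Real.sqrt E) := by
      have hterm : ∀ p : V × V, p ∈ T ×ˢ T →
          -(μ p.1 p.2 * ((u p.2 - u p.1) * (w p.2 * (e p.2 ^ 2 - e p.1 ^ 2)))) ≤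
          (Real.sqrt (μ p.1 p.2) * (e p.2 * |u p.2 - u p.1|)) *
            (Real.sqrt (μ p.1 p.2) * (|w p.2| * |e p.2 - e p.1|)) +
          (Real.sqrt (μ p.1 p.2) * (e p.1 * |u p.2 - u p.1|)) *
            (Real.sqrt (μ p.1 p.2) * (|w p.2| * |e p.2 - e p.1|)) := by
        rintro ⟨x, y⟩ -
        simp only
        have hsq : Real.sqrt (μ x y) * Real.sqrt (μ x y) = μ x y :=
          Real.mul_self_sqrt (hnn x y)
        have h1 : -(μ x y * ((u y - u x) * (w y * (e y ^ 2 - e x ^ 2)))) ≤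
            μ x y * (|u y - u x| * (|w y| * ((e y + e x) * |e y - e x|))) := by
          refine le_trans (neg_le_abs _) ?_
          have he2 : |e y ^ 2 - e x ^ 2| = (e y + e x) * |e y - e x| := by
            have h9 : e y ^ 2 - e x ^ 2 = (e y + e x) * (e y - e x) := by ring
            rw [h9, abs_mul, abs_of_nonneg (add_nonneg (he0 y) (he0 x))]
          rw [abs_mul, abs_mul, abs_mul, abs_of_nonneg (hnn x y), he2]
        have hre : Real.sqrt (μ x y) * (e y * |u y - u x|) *
              (Real.sqrt (μ x y) * (|w y| * |e y - e x|)) +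
            Real.sqrt (μ x y) * (e x * |u y - u x|) *
              (Real.sqrt (μ x y) * (|w y| * |e y - e x|)) =
            (Real.sqrt (μ x y) * Real.sqrt (μ x y)) *
              (|u y - u x| * (|w y| * ((e y + e x) * |e y - e x|))) := by ring
        rw [hsq] at hre
        exact le_trans h1 (le_of_eq hre.symm)
      have h2 : -S2 = ∑ p ∈ T ×ˢ T,
          -(μ p.1 p.2 * ((u p.2 - u p.1) * (w p.2 * (e p.2 ^ 2 - e p.1 ^ 2)))) := by
        rw [hS2def, ← Finset.sum_product', ← Finset.sum_neg_distrib]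
      calc -S2 ≤ ∑ p ∈ T ×ˢ T,
            ((Real.sqrt (μ p.1 p.2) * (e p.2 * |u p.2 - u p.1|)) *
              (Real.sqrt (μ p.1 p.2) * (|w p.2| * |e p.2 - e p.1|)) +
            (Real.sqrt (μ p.1 p.2) * (e p.1 * |u p.2 - u p.1|)) *
              (Real.sqrt (μ p.1 p.2) * (|w p.2| * |e p.2 - e p.1|))) := by
            rw [h2]; exact Finset.sum_le_sum hterm
        _ = (∑ p ∈ T ×ˢ T, (Real.sqrt (μ p.1 p.2) * (e p.2 * |u p.2 - u p.1|)) *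
              (Real.sqrt (μ p.1 p.2) * (|w p.2| * |e p.2 - e p.1|))) +
            ∑ p ∈ T ×ˢ T, (Real.sqrt (μ p.1 p.2) * (e p.1 * |u p.2 - u p.1|)) *
              (Real.sqrt (μ p.1 p.2) * (|w p.2| * |e p.2 - e p.1|)) :=
            Finset.sum_add_distrib
        _ ≤ Real.sqrt (G r) * Real.sqrt E + Real.sqrt (G r) * Real.sqrt E :=
            add_le_add hcs1 hcs2
        _ = 2 * (Real.sqrt (G r) * Real.sqrt E) := by ring
    -- put it together
    have hsqrtE : Real.sqrt E ≤ Real.sqrt (2 * W * c) := Real.sqrt_le_sqrt hEle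
    calc D r = 2 * S1 - 2 * S2 := hsplit
      _ ≤ 2 * (-S2) := by linarith
      _ ≤ 2 * (2 * (Real.sqrt (G r) * Real.sqrt E)) := by linarith
      _ ≤ 2 * (2 * (Real.sqrt (G r) * Real.sqrt (2 * W * c))) := by
          have := mul_le_mul_of_nonneg_left hsqrtE (Real.sqrt_nonneg (G r))
          linarith
      _ = (4 * Real.sqrt (2 * W * c)) * Real.sqrt (G r) := by ring
  -- initial bound
  have hQNnn : 0 ≤ QN μ g := QN_nonneg hnn g
  have hG0le : G 0 ≤ 2 * QN μ g := by
    have h1 : G 0 = ∑ p ∈ T ×ˢ T, μ p.1 p.2 * e p.1 ^ 2 * (g p.2 - g p.1) ^ 2 := by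
      rw [hGdef]; simp only [hP0]; rw [Finset.sum_product]
    have h2 : ∑ p ∈ T ×ˢ T, μ p.1 p.2 * e p.1 ^ 2 * (g p.2 - g p.1) ^ 2 ≤
        ∑ p ∈ T ×ˢ T, μ p.1 p.2 * (g p.2 - g p.1) ^ 2 := by
      apply Finset.sum_le_sum
      intro p _
      have he2 : e p.1 ^ 2 ≤ 1 := by nlinarith [he0 p.1, he1 p.1]
      nlinarith [hnn p.1 p.2, sq_nonneg (g p.2 - g p.1), sq_nonneg (e p.1),
        mul_le_mul_of_nonneg_right (mul_le_mul_of_nonneg_left he2 (hnn p.1 p.2))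
          (sq_nonneg (g p.2 - g p.1))]
    have hsumm : Summable (fun p : V × V => μ p.1 p.2 * (g p.2 - g p.1) ^ 2) :=
      summable_of_support_finite (pair_support_finite hsym hlf hg)
    have h3 : ∑ p ∈ T ×ˢ T, μ p.1 p.2 * (g p.2 - g p.1) ^ 2 ≤
        ∑' p : V × V, μ p.1 p.2 * (g p.2 - g p.1) ^ 2 :=
      Summable.sum_le_tsum _ (fun p _ => mul_nonneg (hnn _ _) (sq_nonneg _)) hsumm
    have h4 : ∑' p : V × V, μ p.1 p.2 * (g p.2 - g p.1) ^ 2 = 2 * QN μ g := by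
      simp only [QN]; ring
    linarith [h1.le]
  -- the ODE comparison
  set ε : ℝ := 4 * Real.sqrt (2 * W * c) with hεdef
  have hε0 : 0 ≤ ε := by positivity
  set φ : ℝ → ℝ := fun r => Real.sqrt (G r + δ) with hφdef
  have hφpos : ∀ r, 0 < G r + δ := fun r => by linarith [hGnn r]
  have hφd : ∀ r, HasDerivAt φ (D r / (2 * Real.sqrt (G r + δ))) r := by
    intro r
    exact ((hGd r).add_const δ).sqrt (hφpos r).ne'
  set ψ : ℝ → ℝ := fun r => ε / 2 * r - φ r with hψdef
  have hψd : ∀ r, HasDerivAt ψ (ε / 2 - D r / (2 * Real.sqrt (G r + δ))) r := by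
    intro r
    have h1 : HasDerivAt (fun r : ℝ => ε / 2 * r) (ε / 2) r := by
      simpa using (hasDerivAt_id r).const_mul (ε / 2)
    exact h1.sub (hφd r)
  have hψmono : MonotoneOn ψ (Set.Icc 0 t) := by
    apply monotoneOn_of_deriv_nonneg (convex_Icc 0 t)
    · exact (Differentiable.continuous (fun r => (hψd r).differentiableAt)).continuousOn
    · exact (Differentiable.differentiableOn (fun r => (hψd r).differentiableAt))
    · intro r hrI
      rw [interior_Icc] at hrI
      rw [(hψd r).deriv]
      have hD := hDle r hrI.1.le
      have hs1 : Real.sqrt (G r) ≤ Real.sqrt (G r + δ) := Real.sqrt_le_sqrt (by linarith)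
      have hs2 : 0 < Real.sqrt (G r + δ) := Real.sqrt_pos.2 (hφpos r)
      have h5 : D r ≤ ε * Real.sqrt (G r + δ) := by
        calc D r ≤ ε * Real.sqrt (G r) := hD
          _ ≤ ε * Real.sqrt (G r + δ) := mul_le_mul_of_nonneg_left hs1 hε0
      have h3 : D r / (2 * Real.sqrt (G r + δ)) ≤ ε / 2 := by
        rw [div_le_iff₀ (by positivity)]
        calc D r ≤ ε * Real.sqrt (G r + δ) := h5
          _ = ε / 2 * (2 * Real.sqrt (G r + δ)) := by ring
      linarith
  have hψ01 : ψ 0 ≤ ψ t := hψmono (Set.left_mem_Icc.2 ht) (Set.right_mem_Icc.2 ht) ht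
  have hφt : φ t ≤ φ 0 + ε / 2 * t := by
    simp only [hψdef] at hψ01
    rw [mul_zero, zero_sub] at hψ01
    linarith
  have hφ0 : φ 0 ≤ Real.sqrt (2 * QN μ g + δ) := by
    apply Real.sqrt_le_sqrt; linarith
  have hGt : G t ≤ (Real.sqrt (2 * QN μ g + δ) + 2 * Real.sqrt (2 * W * c) * t) ^ 2 := by
    have h1 : φ t ≤ Real.sqrt (2 * QN μ g + δ) + 2 * Real.sqrt (2 * W * c) * t := by
      have hεh : ε / 2 = 2 * Real.sqrt (2 * W * c) := by rw [hεdef]; ring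
      rw [← hεh]
      linarith
    have h2 : G t + δ = φ t ^ 2 := by
      rw [hφdef]; simp only; rw [Real.sq_sqrt (hφpos t).le]
    have h3 : φ t ^ 2 ≤ (Real.sqrt (2 * QN μ g + δ) + 2 * Real.sqrt (2 * W * c) * t) ^ 2 := by
      have h0 : 0 ≤ φ t := Real.sqrt_nonneg _
      nlinarith
    linarith
  -- restrict the arbitrary finset to T ×ˢ T
  have hsT : ∑ p ∈ s, μ p.1 p.2 * (e p.1 ^ 2 * (P t g p.2 - P t g p.1) ^ 2) ≤ G t := by
    have hzero : ∀ p ∈ s, p ∉ s ∩ T ×ˢ T →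
        μ p.1 p.2 * (e p.1 ^ 2 * (P t g p.2 - P t g p.1) ^ 2) = 0 := by
      intro p hp hpn
      by_contra h
      have hμ : μ p.1 p.2 ≠ 0 := fun h0 => h (by rw [h0]; ring)
      have hep : e p.1 ≠ 0 := fun h0 => h (by rw [h0]; ring)
      have h1 : p.1 ∈ A := hefin.mem_toFinset.2 hep
      have h2 : p.2 ∈ nb p.1 := (hlf p.1).mem_toFinset.2 hμ
      exact hpn (Finset.mem_inter.2 ⟨hp, Finset.mem_product.2 ⟨hAT h1, hnbT _ h1 h2⟩⟩)
    have h1 : ∑ p ∈ s, μ p.1 p.2 * (e p.1 ^ 2 * (P t g p.2 - P t g p.1) ^ 2) =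
        ∑ p ∈ s ∩ T ×ˢ T, μ p.1 p.2 * (e p.1 ^ 2 * (P t g p.2 - P t g p.1) ^ 2) :=
      (Finset.sum_subset Finset.inter_subset_left hzero).symm
    have h2 : ∑ p ∈ s ∩ T ×ˢ T, μ p.1 p.2 * (e p.1 ^ 2 * (P t g p.2 - P t g p.1) ^ 2) ≤
        ∑ p ∈ T ×ˢ T, μ p.1 p.2 * (e p.1 ^ 2 * (P t g p.2 - P t g p.1) ^ 2) :=
      Finset.sum_le_sum_of_subset_of_nonneg Finset.inter_subset_right
        (fun p _ _ => mul_nonneg (hnn _ _) (mul_nonneg (sq_nonneg _) (sq_nonneg _)))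
    have h3 : ∑ p ∈ T ×ˢ T, μ p.1 p.2 * (e p.1 ^ 2 * (P t g p.2 - P t g p.1) ^ 2) = G t := by
      rw [hGdef]; simp only; rw [Finset.sum_product]
      apply Finset.sum_congr rfl; intro x _
      apply Finset.sum_congr rfl; intro y _
      ring
    rw [h1, ← h3]
    exact h2
  linarith

/-- Energy decay along the heat semigroup, via completeness. -/
lemma energy_decay {V : Type*} (m : V → ℝ) (μ : V → V → ℝ)
    (hm : ∀ x, 0 < m x) (hsym : ∀ x y, μ x y = μ y x)
    (hnn : ∀ x y, 0 ≤ μ x y) (hlf : ∀ x, (Function.support (μ x)).Finite)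
    (η : ℕ → V → ℝ)
    (hηfin : ∀ k, (Function.support (η k)).Finite)
    (hηmono : ∀ k x, η k x ≤ η (k + 1) x)
    (hηlim : ∀ x, Tendsto (fun k => η k x) atTop (nhds 1))
    (hηgam : ∀ k x, 1 ≤ k → gam m μ (η k) (η k) x ≤ 1 / (k : ℝ))
    (P : ℝ → (V → ℝ) → V → ℝ)
    (hP0 : ∀ f, P 0 f = f)
    (hheat : ∀ (f : V → ℝ) (x : V) (t : ℝ), HasDerivAt (fun s => P s f x) (lap m μ (P t f) x) t)
    (hPcomm : ∀ f : V → ℝ, (Function.support f).Finite → ∀ t, P t (lap m μ f) = lap m μ (P t f))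
    (hPl2 : ∀ f : V → ℝ, Summable (fun x => f x ^ 2 * m x) → ∀ t, 0 ≤ t →
      Summable (fun x => (P t f x) ^ 2 * m x) ∧ ∑' x, (P t f x) ^ 2 * m x ≤ ∑' x, f x ^ 2 * m x)
    (g : V → ℝ) (hg : (Function.support g).Finite) (t : ℝ) (ht : 0 ≤ t) :
    Summable (fun p : V × V => μ p.1 p.2 * (P t g p.2 - P t g p.1) ^ 2) ∧
    ∑' p : V × V, μ p.1 p.2 * (P t g p.2 - P t g p.1) ^ 2 ≤ 2 * QN μ g := by
  classical
  have hmono' : ∀ x, Monotone (fun k => η k x) := fun x =>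
    monotone_nat_of_le_succ (fun k => hηmono k x)
  have hle1 : ∀ k x, η k x ≤ 1 := by
    intro k x
    exact ge_of_tendsto (hηlim x) (Filter.eventually_atTop.2 ⟨k, fun j hj => hmono' x hj⟩)
  have hlapfin : (Function.support (lap m μ g)).Finite := lap_support_finite hsym hlf hg
  have hWsum : Summable (fun x => (lap m μ g x) ^ 2 * m x) := by
    apply summable_of_support_finite
    refine hlapfin.subset (fun x hx => ?_)
    simp only [Function.mem_support] at hx ⊢
    intro h0
    exact hx (by rw [h0]; ring)
  set W : ℝ := ∑' x, (lap m μ g x) ^ 2 * m x with hWdef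
  have hwl2 : ∀ s : ℝ, 0 ≤ s → Summable (fun x => (lap m μ (P s g) x) ^ 2 * m x) ∧
      ∑' x, (lap m μ (P s g) x) ^ 2 * m x ≤ W := by
    intro s hs
    have h := hPl2 (lap m μ g) hWsum s hs
    rwa [hPcomm g hg s] at h
  have hQNnn : 0 ≤ QN μ g := QN_nonneg hnn g
  have keyk : ∀ k : ℕ, 1 ≤ k → ∀ δ : ℝ, 0 < δ → ∀ s : Finset (V × V),
      ∑ p ∈ s, μ p.1 p.2 * ((max (η k p.1) 0) ^ 2 * (P t g p.2 - P t g p.1) ^ 2) ≤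
      (Real.sqrt (2 * QN μ g + δ) + 2 * Real.sqrt (2 * W * (1 / (k:ℝ))) * t) ^ 2 := by
    intro k hk δ hδ s
    set e : V → ℝ := fun x => max (η k x) 0 with hedef
    have hefin : (Function.support e).Finite := by
      refine (hηfin k).subset (fun x hx => ?_)
      simp only [Function.mem_support, hedef] at hx ⊢
      intro h0
      exact hx (by rw [h0]; simp)
    have he0 : ∀ x, 0 ≤ e x := fun x => le_max_right _ _
    have he1 : ∀ x, e x ≤ 1 := fun x => max_le (hle1 k x) zero_le_one
    have hkpos : (0:ℝ) < (k:ℝ) := by exact_mod_cast hk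
    have hc : (0:ℝ) ≤ 1 / (k:ℝ) := by positivity
    have hegam : ∀ x, ∑ y ∈ (hlf x).toFinset, μ x y * (e y - e x) ^ 2 ≤
        2 * m x * (1 / (k:ℝ)) := by
      intro x
      have h1 : ∑ y ∈ (hlf x).toFinset, μ x y * (e y - e x) ^ 2 ≤
          ∑ y ∈ (hlf x).toFinset, μ x y * (η k y - η k x) ^ 2 := by
        apply Finset.sum_le_sum
        intro y _
        refine mul_le_mul_of_nonneg_left ?_ (hnn x y)
        have habs := abs_max_sub_max_le_abs (η k y) (η k x) 0
        calc (e y - e x) ^ 2 = |e y - e x| ^ 2 := (sq_abs _).symm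
          _ ≤ |η k y - η k x| ^ 2 := pow_le_pow_left₀ (abs_nonneg _) habs 2
          _ = (η k y - η k x) ^ 2 := sq_abs _
      have h3 : (∑' y, μ x y * (η k y - η k x) * (η k y - η k x)) =
          ∑ y ∈ (hlf x).toFinset, μ x y * (η k y - η k x) * (η k y - η k x) :=
        tsum_nbr hlf x _ (fun y hy => by rw [hy]; ring)
      have hmx : m x ≠ 0 := (hm x).ne'
      have h4 : 2 * m x * gam m μ (η k) (η k) x =
          ∑ y ∈ (hlf x).toFinset, μ x y * (η k y - η k x) * (η k y - η k x) := by
        rw [gam, h3]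
        field_simp
      have h2 : ∑ y ∈ (hlf x).toFinset, μ x y * (η k y - η k x) ^ 2 =
          2 * m x * gam m μ (η k) (η k) x := by
        rw [h4]
        apply Finset.sum_congr rfl; intro y _; ring
      calc ∑ y ∈ (hlf x).toFinset, μ x y * (e y - e x) ^ 2 ≤
            ∑ y ∈ (hlf x).toFinset, μ x y * (η k y - η k x) ^ 2 := h1
        _ = 2 * m x * gam m μ (η k) (η k) x := h2
        _ ≤ 2 * m x * (1 / (k:ℝ)) :=
            mul_le_mul_of_nonneg_left (hηgam k x hk) (by linarith [hm x])
    exact cutoff_bound m μ hm hsym hnn hlf e hefin he0 he1 (1/(k:ℝ)) hc hegam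
      P hP0 hheat g hg W hwl2 t ht δ hδ s
  have hFnn : ∀ p : V × V, 0 ≤ μ p.1 p.2 * (P t g p.2 - P t g p.1) ^ 2 :=
    fun p => mul_nonneg (hnn _ _) (sq_nonneg _)
  have hpartial : ∀ s : Finset (V × V),
      ∑ p ∈ s, μ p.1 p.2 * (P t g p.2 - P t g p.1) ^ 2 ≤ 2 * QN μ g := by
    intro s
    have hδs : ∀ δ : ℝ, 0 < δ →
        ∑ p ∈ s, μ p.1 p.2 * (P t g p.2 - P t g p.1) ^ 2 ≤ 2 * QN μ g + δ := by
      intro δ hδ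
      have hlim1 : Tendsto (fun k : ℕ => ∑ p ∈ s,
          μ p.1 p.2 * ((max (η k p.1) 0) ^ 2 * (P t g p.2 - P t g p.1) ^ 2)) atTop
          (nhds (∑ p ∈ s, μ p.1 p.2 * (P t g p.2 - P t g p.1) ^ 2)) := by
        apply tendsto_finset_sum
        intro p _
        have h1 : Tendsto (fun k => max (η k p.1) 0) atTop (nhds 1) := by
          have := (hηlim p.1).max (tendsto_const_nhds (α := ℕ) (x := (0:ℝ)) (f := atTop))
          simpa using this
        have h2 : Tendsto (fun k => (max (η k p.1) 0) ^ 2) atTop (nhds 1) := by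
          have := h1.pow 2
          simpa using this
        have h3 := (h2.mul_const ((P t g p.2 - P t g p.1) ^ 2)).const_mul (μ p.1 p.2)
        simpa using h3
      have hlim2 : Tendsto (fun k : ℕ =>
          (Real.sqrt (2 * QN μ g + δ) + 2 * Real.sqrt (2 * W * (1/(k:ℝ))) * t) ^ 2) atTop
          (nhds (2 * QN μ g + δ)) := by
        have h1 : Tendsto (fun k : ℕ => 2 * W * (1/(k:ℝ))) atTop (nhds 0) := by
          have := tendsto_one_div_atTop_nhds_zero_nat.const_mul (2 * W)
          simpa using this
        have h2 : Tendsto (fun k : ℕ => Real.sqrt (2 * W * (1/(k:ℝ)))) atTop (nhds 0) := by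
          have := h1.sqrt
          simpa using this
        have h3 : Tendsto (fun k : ℕ => Real.sqrt (2 * QN μ g + δ) +
            2 * Real.sqrt (2 * W * (1/(k:ℝ))) * t) atTop
            (nhds (Real.sqrt (2 * QN μ g + δ))) := by
          have := ((h2.const_mul (2:ℝ)).mul_const t).const_add (Real.sqrt (2 * QN μ g + δ))
          simpa using this
        have h4 := h3.pow 2
        rwa [Real.sq_sqrt (by linarith)] at h4
      refine le_of_tendsto_of_tendsto hlim1 hlim2 ?_
      exact Filter.eventually_atTop.2 ⟨1, fun k hk => keyk k hk δ hδ s⟩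
    by_contra hcon
    push_neg at hcon
    have := hδs ((∑ p ∈ s, μ p.1 p.2 * (P t g p.2 - P t g p.1) ^ 2 - 2 * QN μ g)/2)
      (by linarith)
    linarith
  have hsummF : Summable (fun p : V × V => μ p.1 p.2 * (P t g p.2 - P t g p.1) ^ 2) :=
    summable_of_sum_le hFnn hpartial
  exact ⟨hsummF, Summable.tsum_le_of_sum_le hsummF hpartial⟩

/-- On a complete graph, for finitely supported `f` and `t ≥ 0`, the time derivative
`(d/dt)Γ(P_t f) = 2Γ(P_t f, ΔP_t f)` is `ℓ¹`-bounded: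
`‖(d/dt)Γ(P_t f)‖₁ ≤ 2 √(Q(f) Q(Δf))`. -/
theorem stmt12 {V : Type*} (m : V → ℝ) (μ : V → V → ℝ)
    (hm : ∀ x, 0 < m x) (hsym : ∀ x y, μ x y = μ y x)
    (hnn : ∀ x y, 0 ≤ μ x y) (hlf : ∀ x, (Function.support (μ x)).Finite)
    -- completeness of the graph: cut-off functions `η_k`
    (η : ℕ → V → ℝ)
    (hηfin : ∀ k, (Function.support (η k)).Finite)
    (hηmono : ∀ k x, η k x ≤ η (k + 1) x)
    (hηlim : ∀ x, Tendsto (fun k => η k x) atTop (nhds 1))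
    (hηgam : ∀ k x, 1 ≤ k → gam m μ (η k) (η k) x ≤ 1 / (k : ℝ))
    -- the heat semigroup `P t = e^{tΔ}` and its standard properties
    (P : ℝ → (V → ℝ) → V → ℝ)
    (hP0 : ∀ f, P 0 f = f)
    (hheat : ∀ (f : V → ℝ) (x : V) (t : ℝ), HasDerivAt (fun s => P s f x) (lap m μ (P t f) x) t)
    (hPcomm : ∀ f : V → ℝ, (Function.support f).Finite → ∀ t, P t (lap m μ f) = lap m μ (P t f))
    (hPl2 : ∀ f : V → ℝ, Summable (fun x => f x ^ 2 * m x) → ∀ t, 0 ≤ t →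
      Summable (fun x => (P t f x) ^ 2 * m x) ∧ ∑' x, (P t f x) ^ 2 * m x ≤ ∑' x, f x ^ 2 * m x)
    (hPsym : ∀ f g : V → ℝ, Summable (fun x => f x ^ 2 * m x) →
      Summable (fun x => g x ^ 2 * m x) → ∀ t, 0 ≤ t →
      ∑' x, P t f x * g x * m x = ∑' x, f x * P t g x * m x)
    (hPpos : ∀ f : V → ℝ, (∀ x, 0 ≤ f x) → ∀ t, 0 ≤ t → ∀ x, 0 ≤ P t f x)
    :
    ∀ f : V → ℝ, (Function.support f).Finite → ∀ t, 0 ≤ t →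
      Summable (fun x => |2 * gam m μ (P t f) (lap m μ (P t f)) x| * m x) ∧
      ∑' x, |2 * gam m μ (P t f) (lap m μ (P t f)) x| * m x ≤
        2 * Real.sqrt (QN μ f * QN μ (lap m μ f)) := by
  intro f hf t ht
  classical
  have hlapfin : (Function.support (lap m μ f)).Finite := lap_support_finite hsym hlf hf
  obtain ⟨hSu, hBu⟩ := energy_decay m μ hm hsym hnn hlf η hηfin hηmono hηlim hηgam
    P hP0 hheat hPcomm hPl2 f hf t ht
  obtain ⟨hSv, hBv⟩ := energy_decay m μ hm hsym hnn hlf η hηfin hηmono hηlim hηgam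
    P hP0 hheat hPcomm hPl2 (lap m μ f) hlapfin t ht
  rw [hPcomm f hf t] at hSv hBv
  set u : V → ℝ := P t f with hudef
  set v : V → ℝ := lap m μ (P t f) with hvdef
  set ab : V × V → ℝ := fun p => (Real.sqrt (μ p.1 p.2) * |u p.2 - u p.1|) *
    (Real.sqrt (μ p.1 p.2) * |v p.2 - v p.1|) with habdef
  have habnn : ∀ p, 0 ≤ ab p := fun p => mul_nonneg
    (mul_nonneg (Real.sqrt_nonneg _) (abs_nonneg _))
    (mul_nonneg (Real.sqrt_nonneg _) (abs_nonneg _))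
  have hab_eq : ∀ p : V × V, ab p = μ p.1 p.2 * (|u p.2 - u p.1| * |v p.2 - v p.1|) := by
    intro p
    rw [habdef]
    simp only
    rw [show (Real.sqrt (μ p.1 p.2) * |u p.2 - u p.1|) *
        (Real.sqrt (μ p.1 p.2) * |v p.2 - v p.1|) =
        (Real.sqrt (μ p.1 p.2) * Real.sqrt (μ p.1 p.2)) *
        (|u p.2 - u p.1| * |v p.2 - v p.1|) from by ring,
      Real.mul_self_sqrt (hnn p.1 p.2)]
  have hsqu : ∀ p : V × V, (Real.sqrt (μ p.1 p.2) * |u p.2 - u p.1|) ^ 2 =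
      μ p.1 p.2 * (u p.2 - u p.1) ^ 2 := by
    intro p; rw [mul_pow, Real.sq_sqrt (hnn _ _), sq_abs]
  have hsqv : ∀ p : V × V, (Real.sqrt (μ p.1 p.2) * |v p.2 - v p.1|) ^ 2 =
      μ p.1 p.2 * (v p.2 - v p.1) ^ 2 := by
    intro p; rw [mul_pow, Real.sq_sqrt (hnn _ _), sq_abs]
  have hable : ∀ p : V × V, ab p ≤
      (μ p.1 p.2 * (u p.2 - u p.1) ^ 2 + μ p.1 p.2 * (v p.2 - v p.1) ^ 2) / 2 := by
    intro p
    have h1 := sq_nonneg (Real.sqrt (μ p.1 p.2) * |u p.2 - u p.1| -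
      Real.sqrt (μ p.1 p.2) * |v p.2 - v p.1|)
    have h2 := hsqu p
    have h3 := hsqv p
    simp only [habdef]
    nlinarith
  have hSab : Summable ab := by
    refine Summable.of_nonneg_of_le habnn hable ?_
    exact (hSu.add hSv).div_const 2
  have hQf : 0 ≤ QN μ f := QN_nonneg hnn f
  have hQv : 0 ≤ QN μ (lap m μ f) := QN_nonneg hnn _
  have htab : ∑' p, ab p ≤
      Real.sqrt (2 * QN μ f) * Real.sqrt (2 * QN μ (lap m μ f)) := by
    refine Summable.tsum_le_of_sum_le hSab (fun s => ?_)
    have h1 : ∑ p ∈ s, ab p ≤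
        Real.sqrt (∑ p ∈ s, (Real.sqrt (μ p.1 p.2) * |u p.2 - u p.1|) ^ 2) *
        Real.sqrt (∑ p ∈ s, (Real.sqrt (μ p.1 p.2) * |v p.2 - v p.1|) ^ 2) :=
      le_trans (le_abs_self _) (finset_cs s _ _)
    have h2 : ∑ p ∈ s, (Real.sqrt (μ p.1 p.2) * |u p.2 - u p.1|) ^ 2 ≤ 2 * QN μ f := by
      rw [Finset.sum_congr rfl (fun p _ => hsqu p)]
      refine le_trans (Summable.sum_le_tsum s (fun p _ => mul_nonneg (hnn _ _) (sq_nonneg _)) hSu) hBu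
    have h3 : ∑ p ∈ s, (Real.sqrt (μ p.1 p.2) * |v p.2 - v p.1|) ^ 2 ≤
        2 * QN μ (lap m μ f) := by
      rw [Finset.sum_congr rfl (fun p _ => hsqv p)]
      refine le_trans (Summable.sum_le_tsum s (fun p _ => mul_nonneg (hnn _ _) (sq_nonneg _)) hSv) hBv
    refine le_trans h1 (mul_le_mul (Real.sqrt_le_sqrt h2) (Real.sqrt_le_sqrt h3)
      (Real.sqrt_nonneg _) (Real.sqrt_nonneg _))
  have hgam : ∀ x, |2 * gam m μ u v x| * m x ≤ ∑' y, ab (x, y) := by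
    intro x
    have hmx : (0:ℝ) < m x := hm x
    have h1 : (∑' y, μ x y * (u y - u x) * (v y - v x)) =
        ∑ y ∈ (hlf x).toFinset, μ x y * (u y - u x) * (v y - v x) :=
      tsum_nbr hlf x _ (fun y hy => by rw [hy]; ring)
    have h2 : (∑' y, ab (x, y)) = ∑ y ∈ (hlf x).toFinset, ab (x, y) :=
      tsum_nbr hlf x _ (fun y hy => by simp [habdef, hy])
    have hS : 2 * gam m μ u v x = (∑' y, μ x y * (u y - u x) * (v y - v x)) / m x := by
      rw [gam]; field_simp
    rw [hS, abs_div, abs_of_pos hmx, div_mul_cancel₀ _ hmx.ne']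
    rw [h1, h2]
    refine le_trans (Finset.abs_sum_le_sum_abs _ _) ?_
    apply Finset.sum_le_sum
    intro y _
    rw [hab_eq (x, y)]
    rw [abs_mul, abs_mul, abs_of_nonneg (hnn x y)]
    exact le_of_eq (by ring)
  obtain ⟨hfib, houter⟩ := (summable_prod_of_nonneg (Pi.le_def.mpr habnn)).1 hSab
  have hsum_target : Summable (fun x => |2 * gam m μ u v x| * m x) :=
    Summable.of_nonneg_of_le (fun x => mul_nonneg (abs_nonneg _) (hm x).le) hgam houter
  refine ⟨hsum_target, ?_⟩
  have h5 : ∑' x, |2 * gam m μ u v x| * m x ≤ ∑' x, ∑' y, ab (x, y) :=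
    Summable.tsum_le_tsum hgam hsum_target houter
  have h6 : ∑' x, ∑' y, ab (x, y) = ∑' p, ab p := (Summable.tsum_prod' hSab hfib).symm
  have h7 : Real.sqrt (2 * QN μ f) * Real.sqrt (2 * QN μ (lap m μ f)) =
      2 * Real.sqrt (QN μ f * QN μ (lap m μ f)) := by
    rw [← Real.sqrt_mul (by linarith)]
    rw [show 2 * QN μ f * (2 * QN μ (lap m μ f)) =
      2 ^ 2 * (QN μ f * QN μ (lap m μ f)) from by ring]
    rw [Real.sqrt_mul (by positivity), Real.sqrt_sq (by norm_num)]
  linarith [h5, h6.le, htab, h7.le]
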